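/- There exists exactly one Euler form χ for (L̃, Ĩ, c̃_A), i.e. exactly one ℤ-bilinear form χ : L̃ × L̃ → ℤ with Ĩ(λ,λ') = χ(λ,λ') + χ(λ',λ) and χ(λ,λ') = −χ(λ', c̃_A(λ)) for all λ, λ' ∈ L̃. -/

import Mathlib

namespace AffineGRS

noncomputable section

/-- The vertex set `Ṽ_A` of the affine Coxeter--Dynkin diagram attached to a
triple `A = (a 0, a 1, a 2)`: it consists of `𝟙*`, `𝟙` and the branch vertices
`(i, j)` for `i ∈ {1,2,3}` and `1 ≤ j ≤ a i − 1` (coded by `Fin (a i - 1)`). -/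
inductive Vt (a : Fin 3 → ℕ) : Type where
  | star : Vt a
  | one  : Vt a
  | br   : (i : Fin 3) → Fin (a i - 1) → Vt a

def vtEquiv (a : Fin 3 → ℕ) : Vt a ≃ (Unit ⊕ Unit ⊕ (Σ i : Fin 3, Fin (a i - 1))) where
  toFun v :=
    match v with
    | Vt.star => Sum.inl ()
    | Vt.one => Sum.inr (Sum.inl ())
    | Vt.br i j => Sum.inr (Sum.inr ⟨i, j⟩)
  invFun x :=
    match x with
    | Sum.inl _ => Vt.star
    | Sum.inr (Sum.inl _) => Vt.one
    | Sum.inr (Sum.inr ⟨i, j⟩) => Vt.br i j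
  left_inv v := by cases v <;> rfl
  right_inv x := by rcases x with _ | (_ | ⟨i, j⟩) <;> rfl

instance (a : Fin 3 → ℕ) : DecidableEq (Vt a) := (vtEquiv a).decidableEq
instance (a : Fin 3 → ℕ) : Fintype (Vt a) := Fintype.ofEquiv _ (vtEquiv a).symm

/-- The entries `Ĩ(α_u, α_v)` of the Cartan form on the basis `{α_v : v ∈ Ṽ_A}`. -/
def cartan (a : Fin 3 → ℕ) : Vt a → Vt a → ℤ
  | Vt.star, Vt.star => 2
  | Vt.one, Vt.one => 2
  | Vt.star, Vt.one => 2
  | Vt.one, Vt.star => 2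
  | Vt.star, Vt.br _ j => if (j : ℕ) = 0 then -1 else 0
  | Vt.br _ j, Vt.star => if (j : ℕ) = 0 then -1 else 0
  | Vt.one, Vt.br _ j => if (j : ℕ) = 0 then -1 else 0
  | Vt.br _ j, Vt.one => if (j : ℕ) = 0 then -1 else 0
  | Vt.br i j, Vt.br i' j' =>
      if i = i' ∧ ((j : ℕ) = (j' : ℕ) + 1 ∨ (j' : ℕ) = (j : ℕ) + 1) then -1
      else if i = i' ∧ (j : ℕ) = (j' : ℕ) then 2 else 0

/-- The root lattice `L̃`: the free `ℤ`-module with basis `{α_v : v ∈ Ṽ_A}`. -/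
abbrev Lt (a : Fin 3 → ℕ) : Type := Vt a →₀ ℤ

/-- The basis vector `α_v ∈ L̃`. -/
def gen (a : Fin 3 → ℕ) (v : Vt a) : Lt a := Finsupp.single v 1

/-- The symmetric bilinear form `Ĩ` on `L̃`. -/
def Iform (a : Fin 3 → ℕ) (x y : Lt a) : ℤ :=
  x.sum fun u xu => y.sum fun v yv => xu * yv * cartan a u v

/-- `δ := α_{𝟙*} − α_𝟙`. -/
def delta (a : Fin 3 → ℕ) : Lt a := gen a Vt.star - gen a Vt.one

/-- The reflection `r_α(x) = x − Ĩ(α, x) α` (for `α` with `Ĩ(α,α) = 2`). -/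
def reflect (a : Fin 3 → ℕ) (α : Lt a) (x : Lt a) : Lt a := x - Iform a α x • α

/-- The composite `r_{α_{(i,1)}} ∘ r_{α_{(i,2)}} ∘ ⋯ ∘ r_{α_{(i, a i − 1)}}`. -/
def branchComp (a : Fin 3 → ℕ) (i : Fin 3) : Lt a → Lt a :=
  (List.finRange (a i - 1)).foldr (fun j f => reflect a (gen a (Vt.br i j)) ∘ f) id

/-- The Coxeter transformation
`c̃_A := r_{α_{𝟙*}} ∘ r_{α_𝟙} ∘ r_{α_{(1,1)}} ∘ ⋯ ∘ r_{α_{(3, a₃ − 1)}}`. -/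
def coxeter (a : Fin 3 → ℕ) : Lt a → Lt a :=
  reflect a (gen a Vt.star) ∘ reflect a (gen a Vt.one) ∘
    branchComp a 0 ∘ branchComp a 1 ∘ branchComp a 2

/-- A `ℤ`-bilinear form `χ` on `L̃` is an Euler form for `(L̃, Ĩ, c̃_A)` if
`Ĩ = χ + χᵀ` and `χ(λ, λ') = −χ(λ', c̃_A(λ))` (Serre duality). -/
def IsEulerForm (a : Fin 3 → ℕ) (χ : Lt a →ₗ[ℤ] Lt a →ₗ[ℤ] ℤ) : Prop :=
  (∀ x y : Lt a, Iform a x y = χ x y + χ y x) ∧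
  (∀ x y : Lt a, χ x y = - χ y (coxeter a x))

/-- The twist automorphism `t_δ(λ) = λ − χ(δ, λ) δ` (as a function). -/
def twist (a : Fin 3 → ℕ) (χ : Lt a →ₗ[ℤ] Lt a →ₗ[ℤ] ℤ) (x : Lt a) : Lt a :=
  x - χ (delta a) x • delta a

/-- The inverse of the twist automorphism, `λ ↦ λ + χ(δ, λ) δ`. -/
def twistInv (a : Fin 3 → ℕ) (χ : Lt a →ₗ[ℤ] Lt a →ₗ[ℤ] ℤ) (x : Lt a) : Lt a :=
  x + χ (delta a) x • delta a

/-- The simple reflections `r_{α_v}`, viewed as the set of `ℤ`-linear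
automorphisms of `L̃` whose underlying function is `reflect a (gen a v)`. -/
def weylGens (a : Fin 3 → ℕ) : Set (Lt a ≃ₗ[ℤ] Lt a) :=
  { g | ∃ v : Vt a, ∀ x : Lt a, g x = reflect a (gen a v) x }

/-- The affine Weyl group `W̃_A`, generated by the simple reflections. -/
def weyl (a : Fin 3 → ℕ) : Subgroup (Lt a ≃ₗ[ℤ] Lt a) := Subgroup.closure (weylGens a)

/-- The set of real roots `Δ̃_re = {w(α_v) : w ∈ W̃_A, v ∈ Ṽ_A}`. -/
def realRoots (a : Fin 3 → ℕ) : Set (Lt a) :=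
  { x | ∃ w ∈ weyl a, ∃ v : Vt a, x = w (gen a v) }

/-- The extended affine Weyl group `W̃_A^ext`, generated by `W̃_A` and `t_δ`. -/
def extWeyl (a : Fin 3 → ℕ) (χ : Lt a →ₗ[ℤ] Lt a →ₗ[ℤ] ℤ) :
    Subgroup (Lt a ≃ₗ[ℤ] Lt a) :=
  Subgroup.closure (weylGens a ∪ { g | ∀ x : Lt a, g x = twist a χ x })

/-! ### Auxiliary machinery for the proof of existence and uniqueness -/

section Aux

variable {a : Fin 3 → ℕ}

/-- The bilinear form on `L̃` with matrix `B` in the basis `{α_v}`. -/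
def bil (a : Fin 3 → ℕ) (B : Vt a → Vt a → ℤ) : Lt a →ₗ[ℤ] Lt a →ₗ[ℤ] ℤ :=
  Finsupp.lsum ℤ fun u => LinearMap.toSpanSingleton ℤ (Lt a →ₗ[ℤ] ℤ)
    (Finsupp.lsum ℤ fun v => LinearMap.toSpanSingleton ℤ ℤ (B u v))

lemma bil_single_single (B : Vt a → Vt a → ℤ) (u v : Vt a) (b c : ℤ) :
    bil a B (Finsupp.single u b) (Finsupp.single v c) = b * c * B u v := by
  simp [bil, Finsupp.lsum_single, LinearMap.toSpanSingleton_apply, smul_eq_mul]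
  ring

lemma bil_gen_gen (B : Vt a → Vt a → ℤ) (u v : Vt a) :
    bil a B (gen a u) (gen a v) = B u v := by
  simp [gen, bil_single_single]

lemma bil_apply (B : Vt a → Vt a → ℤ) (x y : Lt a) :
    bil a B x y = x.sum fun u xu => y.sum fun v yv => xu * yv * B u v := by
  classical
  rw [bil, Finsupp.lsum_apply, Finsupp.sum, LinearMap.sum_apply]
  rw [Finsupp.sum]
  refine Finset.sum_congr rfl fun u _ => ?_
  rw [LinearMap.toSpanSingleton_apply, LinearMap.smul_apply, Finsupp.lsum_apply,
    Finsupp.sum, Finsupp.sum, smul_eq_mul, Finset.mul_sum]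
  refine Finset.sum_congr rfl fun v _ => ?_
  rw [LinearMap.toSpanSingleton_apply, smul_eq_mul]
  ring

lemma Iform_eq (x y : Lt a) : Iform a x y = bil a (cartan a) x y := by
  rw [bil_apply, Iform]

lemma Iform_gen_gen (u v : Vt a) : Iform a (gen a u) (gen a v) = cartan a u v := by
  rw [Iform_eq, bil_gen_gen]

/-- Expansion of a linear functional over the coordinates of its argument. -/
lemma linsum (φ : Lt a →ₗ[ℤ] ℤ) (y : Lt a) :
    φ y = y.sum fun v yv => yv * φ (gen a v) := by
  conv_lhs => rw [← Finsupp.sum_single y]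
  rw [map_finsuppSum]
  refine Finsupp.sum_congr fun v _ => ?_
  have : Finsupp.single v (y v) = y v • gen a v := by
    simp [gen, Finsupp.smul_single]
  rw [this, map_smul, smul_eq_mul]

/-- Position of a vertex in the order in which the reflections are composed. -/
def key (a : Fin 3 → ℕ) : Vt a → ℕ
  | Vt.star => 0
  | Vt.one => 1
  | Vt.br i j => 2 + (i : ℕ) * (a 0 + a 1 + a 2) + (j : ℕ)

lemma key_br_bound (i : Fin 3) (j : Fin (a i - 1)) : (j : ℕ) < a 0 + a 1 + a 2 := by
  have hj := j.2
  fin_cases i <;> simp at hj ⊢ <;> omega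

lemma key_inj : Function.Injective (key a) := by
  intro u v huv
  cases u with
  | star => cases v with
    | star => rfl
    | one => simp only [key] at huv; omega
    | br i j => simp only [key] at huv; omega
  | one => cases v with
    | star => simp only [key] at huv; omega
    | one => rfl
    | br i j => simp only [key] at huv; omega
  | br i j => cases v with
    | star => simp only [key] at huv; omega
    | one => simp only [key] at huv; omega
    | br i' j' =>
      have hj := key_br_bound i j
      have hj' := key_br_bound i' j'
      simp only [key] at huv
      have hii : i = i' := by fin_cases i <;> fin_cases i' <;> simp_all <;> omega
      subst hii
      have : (j : ℕ) = (j' : ℕ) := by omega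
      congr 1
      exact Fin.ext this

lemma cartan_symm (u v : Vt a) : cartan a u v = cartan a v u := by
  cases u <;> cases v <;> simp only [cartan] <;>
    · rename_i i j i' j'
      by_cases hii : i = i'
      · subst hii
        simp only [true_and, eq_self_iff_true]
        by_cases h1 : (j : ℕ) = (j' : ℕ) + 1 ∨ (j' : ℕ) = (j : ℕ) + 1
        · rw [if_pos h1, if_pos (Or.symm h1)]
        · rw [if_neg h1, if_neg (fun h => h1 (Or.symm h))]
          by_cases h2 : (j : ℕ) = (j' : ℕ)
          · rw [if_pos h2, if_pos h2.symm]
          · rw [if_neg h2, if_neg (fun h => h2 h.symm)]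
      · have hii' : ¬ i' = i := fun h => hii h.symm
        simp [hii, hii']

lemma cartan_diag (u : Vt a) : cartan a u u = 2 := by
  cases u with
  | star => rfl
  | one => rfl
  | br i j => simp [cartan]

/-- The matrix of the Euler form: upper-triangular part of the Cartan matrix,
with ones on the diagonal. -/
def Emat (a : Fin 3 → ℕ) : Vt a → Vt a → ℤ := fun u v =>
  if u = v then 1 else if key a u < key a v then cartan a u v else 0

lemma Emat_add_transpose (u v : Vt a) :
    Emat a u v + Emat a v u = cartan a u v := by
  by_cases huv : u = v
  · subst huv; simp [Emat, cartan_diag]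
  · have hk : key a u ≠ key a v := fun h => huv (key_inj h)
    have hvu : ¬ v = u := fun h => huv h.symm
    rcases lt_or_gt_of_ne hk with h | h
    · rw [Emat, Emat, if_neg huv, if_neg hvu, if_pos h, if_neg (by omega)]
      ring
    · rw [Emat, Emat, if_neg huv, if_neg hvu, if_neg (by omega), if_pos h,
        cartan_symm]
      ring

lemma Emat_eq_zero_of_lt {u v : Vt a} (h : key a v < key a u) : Emat a u v = 0 := by
  have huv : u ≠ v := fun he => by subst he; omega
  rw [Emat, if_neg huv, if_neg (by omega)]

/-- Composite of the reflections attached to the vertices of a list. -/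
def comp (a : Fin 3 → ℕ) (l : List (Vt a)) : Lt a → Lt a :=
  l.foldr (fun w f => reflect a (gen a w) ∘ f) id

lemma comp_cons (w : Vt a) (l : List (Vt a)) (x : Lt a) :
    comp a (w :: l) x = reflect a (gen a w) (comp a l x) := rfl

lemma comp_foldr (l : List (Vt a)) (g : Lt a → Lt a) :
    l.foldr (fun w f => reflect a (gen a w) ∘ f) g = comp a l ∘ g := by
  induction l with
  | nil => rfl
  | cons w t ih => simp only [List.foldr_cons, ih]; rfl

lemma comp_append (l₁ l₂ : List (Vt a)) (x : Lt a) :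
    comp a (l₁ ++ l₂) x = comp a l₁ (comp a l₂ x) := by
  rw [comp, List.foldr_append, comp_foldr]; rfl

/-- The branch list `[(i,1), …, (i, a i − 1)]`. -/
def brList (a : Fin 3 → ℕ) (i : Fin 3) : List (Vt a) :=
  (List.finRange (a i - 1)).map (Vt.br i)

lemma branchComp_eq (i : Fin 3) : branchComp a i = comp a (brList a i) := by
  rw [branchComp, comp, brList, List.foldr_map]

/-- The full reflection list of the Coxeter transformation. -/
def Lfull (a : Fin 3 → ℕ) : List (Vt a) :=
  Vt.star :: Vt.one :: (brList a 0 ++ brList a 1 ++ brList a 2)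

lemma coxeter_eq_comp (x : Lt a) : coxeter a x = comp a (Lfull a) x := by
  rw [Lfull, comp_cons, comp_cons, comp_append, comp_append,
    ← branchComp_eq, ← branchComp_eq, ← branchComp_eq]
  rfl

lemma mem_brList {w : Vt a} {i : Fin 3} (h : w ∈ brList a i) :
    ∃ j : Fin (a i - 1), w = Vt.br i j := by
  rcases List.mem_map.mp h with ⟨j, _, rfl⟩
  exact ⟨j, rfl⟩

lemma mem_rest {w : Vt a} (h : w ∈ brList a 0 ++ brList a 1 ++ brList a 2) :
    ∃ i j, w = Vt.br i j := by
  rcases List.mem_append.mp h with h' | h'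
  · rcases List.mem_append.mp h' with h'' | h''
    · rcases mem_brList h'' with ⟨j, rfl⟩; exact ⟨_, _, rfl⟩
    · rcases mem_brList h'' with ⟨j, rfl⟩; exact ⟨_, _, rfl⟩
  · rcases mem_brList h' with ⟨j, rfl⟩; exact ⟨_, _, rfl⟩

lemma mem_Lfull (u : Vt a) : u ∈ Lfull a := by
  cases u with
  | star => exact List.mem_cons_self
  | one => exact List.mem_cons_of_mem _ (List.mem_cons_self)
  | br i j =>
    have h1 : Vt.br i j ∈ brList a i := List.mem_map.mpr ⟨j, List.mem_finRange j, rfl⟩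
    have h2 : Vt.br i j ∈ brList a 0 ++ brList a 1 ++ brList a 2 := by
      fin_cases i
      · exact List.mem_append_left _ (List.mem_append_left _ h1)
      · exact List.mem_append_left _ (List.mem_append_right _ h1)
      · exact List.mem_append_right _ h1
    exact List.mem_cons_of_mem _ (List.mem_cons_of_mem _ h2)

lemma key_mem_brList {w : Vt a} {i : Fin 3} (h : w ∈ brList a i) :
    2 + (i : ℕ) * (a 0 + a 1 + a 2) ≤ key a w ∧
      key a w < 2 + (i : ℕ) * (a 0 + a 1 + a 2) + (a 0 + a 1 + a 2) := by
  rcases mem_brList h with ⟨j, rfl⟩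
  have := key_br_bound i j
  simp only [key]
  omega

lemma sorted_brList (i : Fin 3) :
    (brList a i).Pairwise (fun u v => key a u < key a v) := by
  rw [brList, List.pairwise_map]
  refine List.Pairwise.imp ?_ (List.pairwise_lt_finRange _)
  intro j j' h
  simp only [key]
  have : (j : ℕ) < (j' : ℕ) := h
  omega

lemma sorted_Lfull : (Lfull a).Pairwise (fun u v => key a u < key a v) := by
  have cross : ∀ (i i' : Fin 3), (i : ℕ) < (i' : ℕ) →
      ∀ w ∈ brList a i, ∀ w' ∈ brList a i', key a w < key a w' := by
    intro i i' hii w hw w' hw'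
    have h1 := key_mem_brList hw
    have h2 := key_mem_brList hw'
    have h3 : ((i : ℕ) + 1) * (a 0 + a 1 + a 2) ≤ (i' : ℕ) * (a 0 + a 1 + a 2) :=
      Nat.mul_le_mul_right _ (by omega)
    have h4 : ((i : ℕ) + 1) * (a 0 + a 1 + a 2)
        = (i : ℕ) * (a 0 + a 1 + a 2) + (a 0 + a 1 + a 2) := by ring
    omega
  have hb : ∀ i : Fin 3, ∀ w ∈ brList a i, 2 ≤ key a w := by
    intro i w hw
    have := (key_mem_brList hw).1
    omega
  rw [Lfull]
  refine List.pairwise_cons.mpr ⟨?_, List.pairwise_cons.mpr ⟨?_, ?_⟩⟩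
  · intro w hw
    rcases List.mem_cons.mp hw with rfl | hw'
    · simp [key]
    · have : 2 ≤ key a w := by
        rcases List.mem_append.mp hw' with h' | h'
        · rcases List.mem_append.mp h' with h'' | h''
          · exact hb 0 w h''
          · exact hb 1 w h''
        · exact hb 2 w h'
      have h0 : key a Vt.star = 0 := rfl
      omega
  · intro w hw
    have : 2 ≤ key a w := by
      rcases List.mem_append.mp hw with h' | h'
      · rcases List.mem_append.mp h' with h'' | h''
        · exact hb 0 w h''
        · exact hb 1 w h''
      · exact hb 2 w h'
    have h0 : key a Vt.one = 1 := rfl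
    omega
  · refine List.pairwise_append.mpr ⟨List.pairwise_append.mpr
      ⟨sorted_brList 0, sorted_brList 1, ?_⟩, sorted_brList 2, ?_⟩
    · exact cross 0 1 (by norm_num)
    · intro w hw w' hw'
      rcases List.mem_append.mp hw with h' | h'
      · exact cross 0 2 (by norm_num) w h' w' hw'
      · exact cross 1 2 (by norm_num) w h' w' hw'

lemma reflect_functional (ψ : Lt a →ₗ[ℤ] ℤ) (w : Vt a) (z : Lt a) :
    ψ (reflect a (gen a w) z) = ψ z - Iform a (gen a w) z * ψ (gen a w) := by
  rw [reflect, map_sub, map_smul, smul_eq_mul]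

lemma comp_skip (ψ : Lt a →ₗ[ℤ] ℤ) (l : List (Vt a))
    (h : ∀ w ∈ l, ψ (gen a w) = 0) (x : Lt a) : ψ (comp a l x) = ψ x := by
  induction l with
  | nil => rfl
  | cons w t ih =>
    rw [comp_cons, reflect_functional, h w (List.mem_cons_self),
      mul_zero, sub_zero, ih fun v hv => h v (List.mem_cons_of_mem _ hv)]

/-- The Euler form. -/
def chiE (a : Fin 3 → ℕ) : Lt a →ₗ[ℤ] Lt a →ₗ[ℤ] ℤ := bil a (Emat a)

lemma chiE_sub_Iform (u : Vt a) (z : Lt a) :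
    chiE a (gen a u) z - Iform a (gen a u) z = - chiE a z (gen a u) := by
  rw [Iform_eq]
  have h : (chiE a (gen a u) : Lt a →ₗ[ℤ] ℤ) - bil a (cartan a) (gen a u)
      = - (chiE a).flip (gen a u) := by
    apply Finsupp.lhom_ext
    intro v b
    simp only [LinearMap.sub_apply, LinearMap.neg_apply, LinearMap.flip_apply]
    have e1 : chiE a (gen a u) (Finsupp.single v b)
        = 1 * b * Emat a u v := by rw [chiE, gen]; exact bil_single_single _ _ _ _ _
    have e2 : bil a (cartan a) (gen a u) (Finsupp.single v b)
        = 1 * b * cartan a u v := by rw [gen]; exact bil_single_single _ _ _ _ _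
    have e3 : chiE a (Finsupp.single v b) (gen a u)
        = b * 1 * Emat a v u := by rw [chiE, gen]; exact bil_single_single _ _ _ _ _
    rw [e1, e2, e3]
    linear_combination b * (Emat_add_transpose u v)
  calc chiE a (gen a u) z - bil a (cartan a) (gen a u) z
      = ((chiE a (gen a u) : Lt a →ₗ[ℤ] ℤ) - bil a (cartan a) (gen a u)) z := rfl
    _ = - chiE a z (gen a u) := by rw [h]; rfl

/-- Serre duality for `chiE` on basis vectors in the first slot. -/
lemma chiE_gen_coxeter (u : Vt a) (x : Lt a) :
    chiE a (gen a u) (coxeter a x) = - chiE a x (gen a u) := by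
  obtain ⟨l₁, l₂, hL⟩ := List.append_of_mem (mem_Lfull u)
  have hsort := sorted_Lfull (a := a)
  rw [hL] at hsort
  have hpair := List.pairwise_append.mp hsort
  have h1 : ∀ w ∈ l₁, key a w < key a u :=
    fun w hw => hpair.2.2 w hw u (List.mem_cons_self)
  have h2 : ∀ w ∈ l₂, key a u < key a w :=
    fun w hw => (List.pairwise_cons.mp hpair.2.1).1 w hw
  rw [coxeter_eq_comp, hL, comp_append, comp_cons]
  rw [comp_skip (chiE a (gen a u)) l₁ (fun w hw => by
      rw [chiE, bil_gen_gen]; exact Emat_eq_zero_of_lt (h1 w hw))]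
  rw [reflect_functional]
  have hEuu : chiE a (gen a u) (gen a u) = 1 := by
    rw [chiE, bil_gen_gen]; simp [Emat]
  rw [hEuu, mul_one, chiE_sub_Iform]
  congr 1
  exact comp_skip ((chiE a).flip (gen a u)) l₂ (fun w hw => by
      simp only [LinearMap.flip_apply]
      rw [chiE, bil_gen_gen]
      exact Emat_eq_zero_of_lt (h2 w hw)) x

/-- `chiE` satisfies the Serre duality condition. -/
lemma chiE_serre (x y : Lt a) : chiE a x y = - chiE a y (coxeter a x) := by
  have expand : chiE a y (coxeter a x)
      = y.sum fun u yu => yu * chiE a (gen a u) (coxeter a x) :=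
    linsum ((chiE a).flip (coxeter a x)) y
  rw [expand]
  have : (y.sum fun u yu => yu * chiE a (gen a u) (coxeter a x))
      = y.sum fun u yu => - (yu * chiE a x (gen a u)) := by
    refine Finsupp.sum_congr fun u _ => ?_
    rw [chiE_gen_coxeter]; ring
  rw [this]
  have h2 : (y.sum fun u yu => - (yu * chiE a x (gen a u)))
      = - (y.sum fun u yu => yu * chiE a x (gen a u)) := by
    rw [Finsupp.sum, Finsupp.sum, Finset.sum_neg_distrib]
  rw [h2, neg_neg]
  exact linsum (chiE a x) y

/-- `chiE` symmetrizes to the Cartan form. -/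
lemma chiE_symmetrize (x y : Lt a) : Iform a x y = chiE a x y + chiE a y x := by
  rw [Iform_eq]
  have h : bil a (cartan a) = chiE a + (chiE a).flip := by
    apply Finsupp.lhom_ext
    intro u b
    apply Finsupp.lhom_ext
    intro v c
    simp only [LinearMap.add_apply, LinearMap.flip_apply]
    rw [chiE, bil_single_single, bil_single_single, bil_single_single]
    rw [← Emat_add_transpose (a := a) u v]
    ring
  rw [h]; rfl

lemma sum_vt (F : Vt a → ℤ) :
    ∑ w, F w = F Vt.star + F Vt.one
      + ∑ i : Fin 3, ∑ j : Fin (a i - 1), F (Vt.br i j) := by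
  classical
  rw [← Equiv.sum_comp (vtEquiv a).symm F, Fintype.sum_sum_type, Fintype.sum_sum_type]
  simp only [vtEquiv, Equiv.coe_fn_symm_mk]
  rw [← Finset.univ_sigma_univ, Finset.sum_sigma]
  simp [add_assoc]

lemma sum_single_nat {n : ℕ} (F : Fin n → ℤ) (k : ℕ)
    (hF : ∀ j : Fin n, (j : ℕ) ≠ k → F j = 0) :
    ∑ j, F j = if h : k < n then F ⟨k, h⟩ else 0 := by
  split_ifs with h
  · exact Fintype.sum_eq_single ⟨k, h⟩ fun j hj => hF j fun hc => hj (Fin.ext hc)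
  · refine Finset.sum_eq_zero fun j _ => hF j ?_
    have := j.isLt
    omega

/-- Branch coordinates, extended by zero out of range. -/
def bfun (a : Fin 3 → ℕ) (t : Vt a → ℤ) (i : Fin 3) (j : ℕ) : ℤ :=
  if h : j < a i - 1 then t (Vt.br i ⟨j, h⟩) else 0

lemma bfun_of_lt (t : Vt a → ℤ) {i : Fin 3} {j : ℕ} (h : j < a i - 1) :
    bfun a t i j = t (Vt.br i ⟨j, h⟩) := dif_pos h

lemma bfun_of_ge (t : Vt a → ℤ) {i : Fin 3} {j : ℕ} (h : a i - 1 ≤ j) :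
    bfun a t i j = 0 := dif_neg (by omega)

lemma bfun_fin (t : Vt a → ℤ) (i : Fin 3) (j : Fin (a i - 1)) :
    bfun a t i (j : ℕ) = t (Vt.br i j) := by
  rw [bfun_of_lt t j.isLt]

/-- Solving the linear system `t · C = 0`: the radical of the Cartan form. -/
lemma radical_lemma (ha : ∀ i, 0 < a i)
    (hA : 1 < (a 0 : ℚ)⁻¹ + (a 1 : ℚ)⁻¹ + (a 2 : ℚ)⁻¹)
    (t : Vt a → ℤ) (H : ∀ v, ∑ w, t w * cartan a w v = 0) :
    t Vt.one = - t Vt.star ∧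
      ∀ (i : Fin 3) (j : Fin (a i - 1)), t (Vt.br i j) = 0 := by
  classical
  -- the equation coming from the star column
  have hstar : (t Vt.star + t Vt.one) * 2
      - bfun a t 0 0 - bfun a t 1 0 - bfun a t 2 0 = 0 := by
    have h := H Vt.star
    rw [sum_vt] at h
    have hinner : ∀ i : Fin 3,
        (∑ j : Fin (a i - 1), t (Vt.br i j) * cartan a (Vt.br i j) Vt.star)
          = - bfun a t i 0 := by
      intro i
      rw [sum_single_nat _ 0 (fun j hj => by simp only [cartan]; rw [if_neg hj, mul_zero])]
      by_cases h' : 0 < a i - 1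
      · rw [dif_pos h', bfun_of_lt t h']
        simp only [cartan, Fin.val_mk]
        norm_num
      · rw [dif_neg h', bfun_of_ge t (by omega)]
        ring
    rw [Fin.sum_univ_three, hinner 0, hinner 1, hinner 2] at h
    simp only [cartan] at h
    linarith
  -- the equations coming from the branch columns
  have hbr : ∀ (i : Fin 3) (j : ℕ), j < a i - 1 →
      (if j = 0 then -(t Vt.star + t Vt.one) else - bfun a t i (j - 1))
        + 2 * bfun a t i j - bfun a t i (j + 1) = 0 := by
    intro i j hj
    have h := H (Vt.br i ⟨j, hj⟩)
    rw [sum_vt] at h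
    have houter : (∑ i' : Fin 3, ∑ j' : Fin (a i' - 1),
        t (Vt.br i' j') * cartan a (Vt.br i' j') (Vt.br i ⟨j, hj⟩))
          = ∑ j' : Fin (a i - 1),
              t (Vt.br i j') * cartan a (Vt.br i j') (Vt.br i ⟨j, hj⟩) := by
      refine Fintype.sum_eq_single i fun i' hne => Finset.sum_eq_zero fun j' _ => ?_
      simp only [cartan]
      rw [if_neg (by tauto), if_neg (by tauto), mul_zero]
    rw [houter] at h
    have hdecomp : ∀ j' : Fin (a i - 1),
        t (Vt.br i j') * cartan a (Vt.br i j') (Vt.br i ⟨j, hj⟩)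
          = (if (j' : ℕ) = j then 2 * t (Vt.br i j') else 0)
            + (if (j' : ℕ) = j + 1 then - t (Vt.br i j') else 0)
            + (if (j' : ℕ) + 1 = j then - t (Vt.br i j') else 0) := by
      intro j'
      simp only [cartan, Fin.val_mk, true_and]
      rcases eq_or_ne (j' : ℕ) j with hj1 | hj1
      · rw [if_neg (show ¬((j' : ℕ) = j + 1 ∨ j = (j' : ℕ) + 1) by
            rintro (h' | h') <;> omega),
          if_pos hj1, if_pos hj1, if_neg (show ¬(j' : ℕ) = j + 1 by omega),
          if_neg (show ¬((j' : ℕ) + 1 = j) by omega)]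
        ring
      · rcases eq_or_ne (j' : ℕ) (j + 1) with hj2 | hj2
        · rw [if_pos (Or.inl hj2), if_neg hj1, if_pos hj2,
            if_neg (show ¬((j' : ℕ) + 1 = j) by omega)]
          ring
        · rcases eq_or_ne ((j' : ℕ) + 1) j with hj3 | hj3
          · rw [if_pos (Or.inr hj3.symm), if_neg hj1, if_neg hj2, if_pos hj3]
            ring
          · rw [if_neg (show ¬((j' : ℕ) = j + 1 ∨ j = (j' : ℕ) + 1) by
                rintro (h' | h') <;> omega),
              if_neg hj1, if_neg hj1, if_neg hj2, if_neg hj3]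
            ring
    rw [Finset.sum_congr rfl fun j' _ => hdecomp j'] at h
    rw [Finset.sum_add_distrib, Finset.sum_add_distrib] at h
    have hA' : (∑ j' : Fin (a i - 1), if (j' : ℕ) = j then 2 * t (Vt.br i j') else 0)
        = 2 * bfun a t i j := by
      rw [sum_single_nat _ j (fun j' hj' => if_neg hj'), dif_pos hj,
        bfun_of_lt t hj, if_pos rfl]
    have hB' : (∑ j' : Fin (a i - 1), if (j' : ℕ) = j + 1 then - t (Vt.br i j') else 0)
        = - bfun a t i (j + 1) := by
      rw [sum_single_nat _ (j + 1) (fun j' hj' => if_neg hj')]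
      by_cases h' : j + 1 < a i - 1
      · rw [dif_pos h', bfun_of_lt t h', if_pos rfl]
      · rw [dif_neg h', bfun_of_ge t (by omega)]
        ring
    have hC' : (∑ j' : Fin (a i - 1), if (j' : ℕ) + 1 = j then - t (Vt.br i j') else 0)
        = if j = 0 then 0 else - bfun a t i (j - 1) := by
      rcases Nat.eq_zero_or_pos j with rfl | hjpos
      · rw [if_pos rfl]
        exact Finset.sum_eq_zero fun j' _ => by rw [if_neg (by omega)]
      · rw [if_neg (by omega)]
        have hlt : j - 1 < a i - 1 := by omega
        rw [sum_single_nat _ (j - 1) (fun j' hj' => if_neg (by omega)), dif_pos hlt]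
        simp only [Fin.val_mk]
        rw [if_pos (by omega), bfun_of_lt t hlt]
    rw [hA', hB', hC'] at h
    simp only [cartan, Fin.val_mk] at h
    by_cases h0 : j = 0
    · rw [if_pos h0]
      rw [if_pos h0, if_pos h0] at h
      linarith
    · rw [if_neg h0]
      rw [if_neg h0, if_neg h0] at h
      linarith
  -- descending recursion on each branch
  have DESC : ∀ (i : Fin 3) (m : ℕ), m ≤ a i - 1 →
      bfun a t i (a i - 1 - m) = (m : ℤ) * bfun a t i (a i - 1 - 1) := by
    intro i m
    induction m using Nat.strong_induction_on with
    | _ m IH =>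
      match m with
      | 0 => intro _; rw [Nat.sub_zero, bfun_of_ge t le_rfl]; simp
      | 1 => intro _; push_cast; ring
      | (k+2) =>
        intro hm
        have e := hbr i (a i - 1 - (k + 1)) (by omega)
        rw [if_neg (by omega)] at e
        have h1 := IH (k + 1) (by omega) (by omega)
        have h2 := IH k (by omega) (by omega)
        have e1 : a i - 1 - (k + 1) - 1 = a i - 1 - (k + 2) := by omega
        have e2 : a i - 1 - (k + 1) + 1 = a i - 1 - k := by omega
        rw [e1, e2, h1, h2] at e
        push_cast
        push_cast at e h1 h2
        linarith
  -- the first entry of each branch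
  have hfirst : ∀ i : Fin 3, bfun a t i 0 = ((a i : ℤ) - 1) * bfun a t i (a i - 1 - 1) := by
    intro i
    have h := DESC i (a i - 1) le_rfl
    rw [Nat.sub_self] at h
    rw [h]
    have hc : ((a i - 1 : ℕ) : ℤ) = (a i : ℤ) - 1 := by
      have := ha i; push_cast; omega
    rw [hc]
  -- the relation `s = a i * T i` for branches of positive length
  have SREL : ∀ i : Fin 3, 2 ≤ a i →
      t Vt.star + t Vt.one = (a i : ℤ) * bfun a t i (a i - 1 - 1) := by
    intro i hai
    have e := hbr i 0 (by omega)
    rw [if_pos rfl] at e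
    have h0 := hfirst i
    have h1 : bfun a t i 1 = ((a i : ℤ) - 2) * bfun a t i (a i - 1 - 1) := by
      have h := DESC i (a i - 1 - 1) (by omega)
      have e1 : a i - 1 - (a i - 1 - 1) = 1 := by omega
      rw [e1] at h
      rw [h]
      have hc : ((a i - 1 - 1 : ℕ) : ℤ) = (a i : ℤ) - 2 := by push_cast; omega
      rw [hc]
    rw [h0, h1] at e
    have hai' : (2 : ℤ) ≤ (a i : ℤ) := by exact_mod_cast hai
    linarith
  -- zero-length branches
  have TZERO : ∀ i : Fin 3, a i = 1 → bfun a t i (a i - 1 - 1) = 0 := by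
    intro i hai
    apply bfun_of_ge
    omega
  -- the numerical inequality from the hypothesis `1/a₀ + 1/a₁ + 1/a₂ > 1`
  have hQP : (a 0 : ℤ) * a 1 * a 2 < (a 1 : ℤ) * a 2 + (a 0 : ℤ) * a 2 + (a 0 : ℤ) * a 1 := by
    have h0 : (0 : ℚ) < a 0 := by exact_mod_cast ha 0
    have h1 : (0 : ℚ) < a 1 := by exact_mod_cast ha 1
    have h2 : (0 : ℚ) < a 2 := by exact_mod_cast ha 2
    have hP : (0 : ℚ) < (a 0 : ℚ) * a 1 * a 2 := by positivity
    have hkey : ((a 0 : ℚ) * a 1 * a 2) * ((a 0 : ℚ)⁻¹ + (a 1 : ℚ)⁻¹ + (a 2 : ℚ)⁻¹)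
        = (a 1 : ℚ) * a 2 + (a 0 : ℚ) * a 2 + (a 0 : ℚ) * a 1 := by
      field_simp
    have hlt := mul_lt_mul_of_pos_left hA hP
    rw [mul_one, hkey] at hlt
    exact_mod_cast hlt
  -- conclude `s = 0`
  have hs0 : t Vt.star + t Vt.one = 0 := by
    have hstar2 : 2 * (t Vt.star + t Vt.one)
        = ((a 0 : ℤ) - 1) * bfun a t 0 (a 0 - 1 - 1)
          + ((a 1 : ℤ) - 1) * bfun a t 1 (a 1 - 1 - 1)
          + ((a 2 : ℤ) - 1) * bfun a t 2 (a 2 - 1 - 1) := by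
      linarith [hfirst 0, hfirst 1, hfirst 2, hstar]
    have term : ∀ i : Fin 3, ((a i : ℤ) - 1) * ((a i : ℤ) * bfun a t i (a i - 1 - 1))
        = ((a i : ℤ) - 1) * (t Vt.star + t Vt.one) := by
      intro i
      rcases Nat.lt_or_ge (a i) 2 with h | h
      · have hai : a i = 1 := by have := ha i; omega
        rw [TZERO i hai]
        have h1 : ((a i : ℤ) - 1) = 0 := by rw [hai]; norm_num
        rw [h1]
        ring
      · rw [← SREL i h]
    have t0 := term 0
    have t1 := term 1
    have t2 := term 2
    have hfin : (t Vt.star + t Vt.one)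
        * (((a 1 : ℤ) * a 2 + (a 0 : ℤ) * a 2 + (a 0 : ℤ) * a 1)
            - (a 0 : ℤ) * a 1 * a 2) = 0 := by
      linear_combination ((a 0 : ℤ) * a 1 * a 2) * hstar2
        + ((a 1 : ℤ) * a 2) * t0 + ((a 0 : ℤ) * a 2) * t1 + ((a 0 : ℤ) * a 1) * t2
    rcases mul_eq_zero.mp hfin with h | h
    · exact h
    · exfalso; omega
  -- conclude that all branch values vanish
  have hT : ∀ i : Fin 3, bfun a t i (a i - 1 - 1) = 0 := by
    intro i
    rcases Nat.lt_or_ge (a i) 2 with h | h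
    · exact TZERO i (by have := ha i; omega)
    · have hsr := SREL i h
      rw [hs0] at hsr
      have hai : (a i : ℤ) ≠ 0 := by
        have := ha i
        exact_mod_cast by omega
      rcases mul_eq_zero.mp hsr.symm with h' | h'
      · exact absurd h' hai
      · exact h'
  refine ⟨by omega, fun i j => ?_⟩
  have h := DESC i (a i - 1 - (j : ℕ)) (by omega)
  have e1 : a i - 1 - (a i - 1 - (j : ℕ)) = (j : ℕ) := by have := j.isLt; omega
  rw [e1, hT i, mul_zero] at h
  rw [← bfun_fin t i j, h]

lemma Ibil_star_eq_one :
    bil a (cartan a) (gen a Vt.star) = bil a (cartan a) (gen a Vt.one) := by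
  apply Finsupp.lhom_ext
  intro v b
  simp only [gen]
  rw [bil_single_single, bil_single_single]
  have h : cartan a Vt.star v = cartan a Vt.one v := by cases v <;> rfl
  rw [h]

lemma reflect_functional' (ψ : Lt a →ₗ[ℤ] ℤ) (w : Vt a) (z : Lt a) :
    ψ (reflect a (gen a w) z)
      = (ψ - ψ (gen a w) • bil a (cartan a) (gen a w)) z := by
  simp only [LinearMap.sub_apply, LinearMap.smul_apply, smul_eq_mul]
  rw [reflect_functional, ← Iform_eq]
  ring

/-- Expansion of a functional composed with a product of reflections. -/
lemma phi (l : List (Vt a)) (ψ : Lt a →ₗ[ℤ] ℤ) :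
    ∃ t : Vt a → ℤ, (∀ w, w ∉ l → t w = 0)
      ∧ (∀ x, ψ (comp a l x) = ψ x - ∑ w, t w * Iform a (gen a w) x)
      ∧ (∀ w₀ tl, l = w₀ :: tl → w₀ ∉ tl → t w₀ = ψ (gen a w₀)) := by
  classical
  induction l generalizing ψ with
  | nil =>
    exact ⟨0, fun _ _ => rfl, fun x => by simp [comp], fun w₀ tl h _ => by simp at h⟩
  | cons w tl IH =>
    set ψ' := ψ - ψ (gen a w) • bil a (cartan a) (gen a w) with hψ'
    obtain ⟨t', ht0, hexp, _⟩ := IH ψ'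
    refine ⟨fun v => if v = w then t' v + ψ (gen a w) else t' v, ?_, ?_, ?_⟩
    · intro v hv
      dsimp only
      rw [if_neg (show v ≠ w from fun h => hv (by rw [h]; exact List.mem_cons_self))]
      exact ht0 v fun h => hv (List.mem_cons_of_mem _ h)
    · intro x
      dsimp only
      have hsum : (∑ v, (if v = w then t' v + ψ (gen a w) else t' v)
            * Iform a (gen a v) x)
          = (∑ v, t' v * Iform a (gen a v) x)
            + ψ (gen a w) * Iform a (gen a w) x := by
        have hpt : ∀ v, (if v = w then t' v + ψ (gen a w) else t' v)
              * Iform a (gen a v) x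
            = t' v * Iform a (gen a v) x
              + (if v = w then ψ (gen a w) * Iform a (gen a v) x else 0) := by
          intro v; split_ifs <;> ring
        rw [Finset.sum_congr rfl fun v _ => hpt v, Finset.sum_add_distrib,
          Finset.sum_ite_eq' Finset.univ w
            fun v => ψ (gen a w) * Iform a (gen a v) x,
          if_pos (Finset.mem_univ w)]
      have hψx : ψ' x = ψ x - ψ (gen a w) * Iform a (gen a w) x := by
        rw [hψ']
        simp only [LinearMap.sub_apply, LinearMap.smul_apply, smul_eq_mul]
        rw [← Iform_eq]
      rw [comp_cons, reflect_functional' ψ w, ← hψ', hexp x, hψx, hsum]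
      ring
    · intro w₀ tl₀ he hnot
      injection he with he1 he2
      subst he1; subst he2
      dsimp only
      rw [if_pos rfl, ht0 _ hnot, zero_add]

/-- If a composite of branch reflections fixes `ψ`, then `ψ` kills the
corresponding simple roots. -/
lemma fix_branch (ha : ∀ i, 0 < a i)
    (hA : 1 < (a 0 : ℚ)⁻¹ + (a 1 : ℚ)⁻¹ + (a 2 : ℚ)⁻¹) (ψ : Lt a →ₗ[ℤ] ℤ) :
    ∀ l : List (Vt a), (∀ w ∈ l, ∃ i j, w = Vt.br i j) → l.Nodup →
      (∀ x, ψ (comp a l x) = ψ x) → ∀ w ∈ l, ψ (gen a w) = 0 := by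
  intro l
  induction l with
  | nil => intro _ _ _ w hw; exact absurd hw List.not_mem_nil
  | cons w tl IH =>
    intro hbrs hnd hfx
    obtain ⟨t, ht0, hexp, hhead⟩ := phi (w :: tl) ψ
    have hz : ∀ x, ∑ v, t v * Iform a (gen a v) x = 0 := by
      intro x; have h1 := hexp x; rw [hfx x] at h1; linarith
    have H' : ∀ v, ∑ u, t u * cartan a u v = 0 := by
      intro v
      have h1 := hz (gen a v)
      have h2 : (∑ u, t u * Iform a (gen a u) (gen a v))
          = ∑ u, t u * cartan a u v :=
        Finset.sum_congr rfl fun u _ => by rw [Iform_gen_gen]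
      rw [h2] at h1
      exact h1
    obtain ⟨h1, h2⟩ := radical_lemma ha hA t H'
    have hw0 : ψ (gen a w) = 0 := by
      have hh := hhead w tl rfl (List.nodup_cons.mp hnd).1
      rcases hbrs w (List.mem_cons_self) with ⟨i, j, hij⟩
      rw [← hh, hij]
      exact h2 i j
    have hfx' : ∀ x, ψ (comp a tl x) = ψ x := by
      intro x
      have h3 := hfx x
      rw [comp_cons, reflect_functional, hw0, mul_zero, sub_zero] at h3
      exact h3
    intro v hv
    rcases List.mem_cons.mp hv with rfl | hv'
    · exact hw0
    · exact IH (fun u hu => hbrs u (List.mem_cons_of_mem _ hu))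
        (List.nodup_cons.mp hnd).2 hfx' v hv'

lemma star_not_mem_rest : Vt.star ∉ brList a 0 ++ brList a 1 ++ brList a 2 := by
  intro h
  rcases mem_rest h with ⟨i, j, hh⟩
  exact nomatch hh

lemma one_not_mem_rest : Vt.one ∉ brList a 0 ++ brList a 1 ++ brList a 2 := by
  intro h
  rcases mem_rest h with ⟨i, j, hh⟩
  exact nomatch hh

lemma br_mem_rest (i : Fin 3) (j : Fin (a i - 1)) :
    Vt.br i j ∈ brList a 0 ++ brList a 1 ++ brList a 2 := by
  have h := mem_Lfull (Vt.br i j)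
  rcases List.mem_cons.mp h with hh | h'
  · exact absurd hh (by exact fun hc => nomatch hc)
  · rcases List.mem_cons.mp h' with hh | h''
    · exact absurd hh (by exact fun hc => nomatch hc)
    · exact h''

lemma nodup_rest : (brList a 0 ++ brList a 1 ++ brList a 2).Nodup := by
  have h := sorted_Lfull (a := a)
  rw [Lfull] at h
  have h1 := (List.pairwise_cons.mp h).2
  have h2 := (List.pairwise_cons.mp h1).2
  refine h2.imp ?_
  intro u v huv heq
  rw [heq] at huv
  omega

/-- Core of the uniqueness argument: a functional fixed by the Coxeter
transformation is a multiple of `λ ↦ λ_{𝟙*} + λ_𝟙`. -/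
lemma psi_lemma (ha : ∀ i, 0 < a i)
    (hA : 1 < (a 0 : ℚ)⁻¹ + (a 1 : ℚ)⁻¹ + (a 2 : ℚ)⁻¹)
    (ψ : Lt a →ₗ[ℤ] ℤ) (hfix : ∀ y, ψ (coxeter a y) = ψ y) :
    ψ (gen a Vt.one) = ψ (gen a Vt.star) ∧
      ∀ (i : Fin 3) (j : Fin (a i - 1)), ψ (gen a (Vt.br i j)) = 0 := by
  classical
  set rest : List (Vt a) := brList a 0 ++ brList a 1 ++ brList a 2 with hrest
  set s : ℤ := ψ (gen a Vt.star) with hs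
  set ψ₁ : Lt a →ₗ[ℤ] ℤ := ψ - s • bil a (cartan a) (gen a Vt.star) with hψ₁
  set ψ₂ : Lt a →ₗ[ℤ] ℤ :=
    ψ₁ - ψ₁ (gen a Vt.one) • bil a (cartan a) (gen a Vt.one) with hψ₂
  have hLfull : Lfull a = Vt.star :: Vt.one :: rest := rfl
  have hcomp : ∀ x, ψ₂ (comp a rest x) = ψ x := by
    intro x
    have h0 : ψ (comp a (Lfull a) x) = ψ x := by rw [← coxeter_eq_comp]; exact hfix x
    rw [hLfull, comp_cons, comp_cons, reflect_functional' ψ Vt.star, ← hs, ← hψ₁,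
      reflect_functional' ψ₁ Vt.one, ← hψ₂] at h0
    exact h0
  obtain ⟨t', ht0, hexp, _⟩ := phi rest ψ₂
  have hψ₂x : ∀ x, ψ₂ x = ψ x - s * bil a (cartan a) (gen a Vt.star) x
      - ψ₁ (gen a Vt.one) * bil a (cartan a) (gen a Vt.one) x := by
    intro x
    rw [hψ₂, hψ₁]
    simp only [LinearMap.sub_apply, LinearMap.smul_apply, smul_eq_mul]
    try ring
  have hzero : ∀ x, s * bil a (cartan a) (gen a Vt.star) x
      + ψ₁ (gen a Vt.one) * bil a (cartan a) (gen a Vt.one) x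
      + ∑ v, t' v * Iform a (gen a v) x = 0 := by
    intro x
    have h1 := hexp x
    rw [hcomp x, hψ₂x x] at h1
    linarith
  set t : Vt a → ℤ := fun v => t' v + (if v = Vt.star then s else 0)
      + (if v = Vt.one then ψ₁ (gen a Vt.one) else 0) with ht
  have H' : ∀ v, ∑ u, t u * cartan a u v = 0 := by
    intro v
    have h1 := hzero (gen a v)
    have hpt : ∀ u, t u * cartan a u v
        = t' u * cartan a u v + (if u = Vt.star then s * cartan a u v else 0)
          + (if u = Vt.one then ψ₁ (gen a Vt.one) * cartan a u v else 0) := by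
      intro u
      rw [ht]
      dsimp only
      split_ifs <;> ring
    rw [Finset.sum_congr rfl fun u _ => hpt u, Finset.sum_add_distrib,
      Finset.sum_add_distrib,
      Finset.sum_ite_eq' Finset.univ Vt.star fun u => s * cartan a u v,
      Finset.sum_ite_eq' Finset.univ Vt.one
        fun u => ψ₁ (gen a Vt.one) * cartan a u v,
      if_pos (Finset.mem_univ _), if_pos (Finset.mem_univ _)]
    have h2 : (∑ u, t' u * cartan a u v)
        = ∑ u, t' u * Iform a (gen a u) (gen a v) :=
      Finset.sum_congr rfl fun u _ => by rw [Iform_gen_gen]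
    rw [h2]
    have h3 : bil a (cartan a) (gen a Vt.star) (gen a v) = cartan a Vt.star v :=
      bil_gen_gen _ _ _
    have h4 : bil a (cartan a) (gen a Vt.one) (gen a v) = cartan a Vt.one v :=
      bil_gen_gen _ _ _
    rw [h3, h4] at h1
    linarith
  obtain ⟨h1, h2⟩ := radical_lemma ha hA t H'
  have ht's : t' Vt.star = 0 := ht0 _ star_not_mem_rest
  have ht'o : t' Vt.one = 0 := ht0 _ one_not_mem_rest
  have htstar : t Vt.star = s := by rw [ht]; simp [ht's]
  have htone : t Vt.one = ψ₁ (gen a Vt.one) := by rw [ht]; simp [ht'o]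
  have hψ1one : ψ₁ (gen a Vt.one) = ψ (gen a Vt.one) - 2 * s := by
    rw [hψ₁]
    simp only [LinearMap.sub_apply, LinearMap.smul_apply, smul_eq_mul]
    rw [bil_gen_gen]
    have hc : cartan a Vt.star Vt.one = 2 := rfl
    rw [hc]
    ring
  have hone_eq : ψ (gen a Vt.one) = s := by
    rw [htone, htstar, hψ1one] at h1
    linarith
  have hψ₂eq : ∀ x, ψ₂ x = ψ x := by
    intro x
    rw [hψ₂x x, hψ1one, hone_eq, Ibil_star_eq_one]
    ring
  have hrest_fix : ∀ x, ψ (comp a rest x) = ψ x := by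
    intro x
    rw [← hψ₂eq (comp a rest x), hcomp x]
  have hall := fix_branch ha hA ψ rest
    (fun w hw => mem_rest hw) nodup_rest hrest_fix
  exact ⟨hone_eq, fun i j => hall _ (br_mem_rest i j)⟩

end Aux

/-- **Existence and uniqueness of the Euler form** for the generalized root
system `(R̃_A, c̃_A)` of affine ADE type (Lemma 2.12 of NST + Lemma 3.2 of the
paper): there exists exactly one `ℤ`-bilinear form `χ : L̃ × L̃ → ℤ` with
`Ĩ(λ,λ') = χ(λ,λ') + χ(λ',λ)` and `χ(λ,λ') = −χ(λ', c̃_A(λ))` for all `λ, λ'`. -/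
theorem euler_form_existsUnique (a : Fin 3 → ℕ) (ha : ∀ i, 0 < a i)
    (hA : 1 < (a 0 : ℚ)⁻¹ + (a 1 : ℚ)⁻¹ + (a 2 : ℚ)⁻¹) :
    ∃! χ : Lt a →ₗ[ℤ] Lt a →ₗ[ℤ] ℤ, IsEulerForm a χ := by
  refine ⟨chiE a, ⟨fun x y => chiE_symmetrize x y, fun x y => chiE_serre x y⟩, ?_⟩
  intro χ' hχ'
  obtain ⟨hχ1, hχ2⟩ := hχ'
  set D : Lt a →ₗ[ℤ] Lt a →ₗ[ℤ] ℤ := χ' - chiE a with hD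
  have hDapp : ∀ x y, D x y = χ' x y - chiE a x y := fun x y => rfl
  have hskew : ∀ x y, D x y = - D y x := by
    intro x y
    have h1 := hχ1 x y
    have h2 := chiE_symmetrize (a := a) x y
    rw [hDapp, hDapp]
    linarith
  have hfixD : ∀ x y, (D x) (coxeter a y) = (D x) y := by
    intro x y
    have h1 : χ' y x = - χ' x (coxeter a y) := hχ2 y x
    have h2 : chiE a y x = - chiE a x (coxeter a y) := chiE_serre y x
    have h3 := hskew x y
    have h4 := hDapp x (coxeter a y)
    have h5 := hDapp x y
    have h6 := hDapp y x
    linarith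
  have hpsi := fun x => psi_lemma ha hA (D x) (hfixD x)
  have hdiag : ∀ x, D x x = 0 := fun x => by have := hskew x x; linarith
  have hstar0 : ∀ u, D (gen a u) (gen a Vt.star) = 0 := by
    intro u
    have h1 : D (gen a Vt.star) (gen a u) = 0 := by
      cases u with
      | star => exact hdiag _
      | one => rw [(hpsi (gen a Vt.star)).1]; exact hdiag _
      | br i j => exact (hpsi (gen a Vt.star)).2 i j
    rw [hskew, h1, neg_zero]
  have base : ∀ u v, D (gen a u) (gen a v) = 0 := by
    intro u v
    cases v with
    | star => exact hstar0 u
    | one => rw [(hpsi (gen a u)).1]; exact hstar0 u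
    | br i j => exact (hpsi (gen a u)).2 i j
  have hD0 : D = 0 := by
    apply Finsupp.lhom_ext
    intro u b
    apply Finsupp.lhom_ext
    intro v c
    have e1 : (Finsupp.single u b : Lt a) = b • gen a u := by
      simp [gen, Finsupp.smul_single]
    have e2 : (Finsupp.single v c : Lt a) = c • gen a v := by
      simp [gen, Finsupp.smul_single]
    rw [e1, e2]
    simp only [map_smul, LinearMap.smul_apply, smul_eq_mul, base u v,
      mul_zero, LinearMap.zero_apply]
  have : χ' - chiE a = 0 := hD0
  exact sub_eq_zero.mp this

end
end AffineGRS
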